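/- Let π : T^n → T^d be a torus homomorphism whose restriction to a subvariety X ⊆ T^n is birational, with rational inverse φ : T^d ⇢ X. Then Trop(π) ∘ Trop(φ) is the identity map on ℝ^d. -/

import Mathlib

open MvPolynomial

/-- The tropicalisation of a polynomial `f = Σ_α c_α x^α` with respect to a valuation
`v` on the coefficients: `Trop(f)(ξ) = min_{α : c_α ≠ 0} (v(c_α) + ξ·α)`.
(Defined as `0` for the zero polynomial.) -/
noncomputable def Trop {K : Type*} [CommRing K] {m : ℕ} (v : K → ℝ)
    (f : MvPolynomial (Fin m) K) (ξ : Fin m → ℝ) : ℝ :=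
  if h : f.support.Nonempty then
    f.support.inf' h (fun α => v (f.coeff α) + ∑ j, ξ j * (α j : ℝ))
  else 0

open Finsupp

set_option linter.unusedSectionVars false
set_option linter.unusedVariables false

section VLemmas

variable {K : Type*} [Field K] (v : K → ℝ)
  (hmul : ∀ a b : K, a ≠ 0 → b ≠ 0 → v (a * b) = v a + v b)
  (hadd : ∀ a b : K, a ≠ 0 → b ≠ 0 → a + b ≠ 0 → min (v a) (v b) ≤ v (a + b))

include hmul in
lemma v_one' : v 1 = 0 := by
  have := hmul 1 1 one_ne_zero one_ne_zero
  simp at this; linarith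

include hmul in
lemma v_neg' {a : K} (ha : a ≠ 0) : v (-a) = v a := by
  have h1 : v ((-1 : K) * (-1)) = v (-1) + v (-1) := hmul _ _ (by norm_num) (by norm_num)
  simp at h1
  rw [v_one' v hmul] at h1
  have := hmul (-1) a (by norm_num) ha
  rw [neg_one_mul] at this
  rw [this]; linarith

include hmul hadd in
lemma v_sum_le' {ι : Type*} (s : Finset ι) (t : ι → K) (h : (∑ a ∈ s, t a) ≠ 0) :
    ∃ a ∈ s, t a ≠ 0 ∧ v (t a) ≤ v (∑ a ∈ s, t a) := by
  classical
  induction s using Finset.induction_on with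
  | empty => simp at h
  | @insert a s ha ih =>
    rw [Finset.sum_insert ha] at h ⊢
    by_cases h1 : t a = 0
    · rw [h1, zero_add] at h ⊢
      obtain ⟨b, hb, hb2, hb3⟩ := ih h
      exact ⟨b, Finset.mem_insert_of_mem hb, hb2, hb3⟩
    by_cases h2 : (∑ x ∈ s, t x) = 0
    · rw [h2, add_zero] at h ⊢
      exact ⟨a, Finset.mem_insert_self a s, h1, le_refl _⟩
    have hm := hadd _ _ h1 h2 h
    rcases le_total (v (t a)) (v (∑ x ∈ s, t x)) with hle | hle
    · exact ⟨a, Finset.mem_insert_self a s, h1, le_trans (by simp [min_eq_left hle] at hm ⊢; exact hm) (le_refl _)⟩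
    · obtain ⟨b, hb, hb2, hb3⟩ := ih h2
      exact ⟨b, Finset.mem_insert_of_mem hb, hb2, le_trans hb3 (by rw [min_eq_right hle] at hm; exact hm)⟩

include hmul hadd in
lemma v_add_strict {a b : K} (ha : a ≠ 0) (hb : b = 0 ∨ (b ≠ 0 ∧ v a < v b)) :
    a + b ≠ 0 ∧ v (a + b) = v a := by
  rcases hb with hb | ⟨hb, hlt⟩
  · simp [hb, ha]
  have hne : a + b ≠ 0 := by
    intro h
    have hba : b = -a := eq_neg_of_add_eq_zero_right h
    rw [hba, v_neg' v hmul ha] at hlt; linarith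
  refine ⟨hne, le_antisymm ?_ ?_⟩
  · -- v (a+b) ≤ v a : a = (a+b) + (-b)
    have h1 : a = (a + b) + (-b) := by ring
    have h2 : v a = v ((a + b) + (-b)) := by rw [← h1]
    by_cases h3 : (a + b) + (-b) = 0
    · exfalso; apply ha; rw [h1, h3]
    have := hadd (a + b) (-b) hne (neg_ne_zero.mpr hb) h3
    rw [v_neg' v hmul hb] at this
    rw [h2]
    rcases min_cases (v (a + b)) (v b) with ⟨he, _⟩ | ⟨he, hc⟩
    · rw [he] at this; linarith
    · rw [he] at this; linarith
  · have := hadd a b ha hb hne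
    rw [min_eq_left (le_of_lt hlt)] at this; exact this

include hmul hadd in
lemma v_sum_strict {ι : Type*} [DecidableEq ι] (s : Finset ι) (t : ι → K) (a₀ : ι) (ha₀ : a₀ ∈ s)
    (ht : t a₀ ≠ 0) (hlt : ∀ a ∈ s, a ≠ a₀ → t a ≠ 0 → v (t a₀) < v (t a)) :
    (∑ a ∈ s, t a) ≠ 0 ∧ v (∑ a ∈ s, t a) = v (t a₀) := by
  rw [← Finset.add_sum_erase s t ha₀]
  apply v_add_strict v hmul hadd ht
  by_cases h2 : (∑ x ∈ s.erase a₀, t x) = 0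
  · exact Or.inl h2
  right
  refine ⟨h2, ?_⟩
  obtain ⟨b, hb, hb2, hb3⟩ := v_sum_le' v hmul hadd _ t h2
  exact lt_of_lt_of_le (hlt b (Finset.mem_of_mem_erase hb) (Finset.ne_of_mem_erase hb) hb2) hb3

end VLemmas

section TropLemmas

variable {K : Type*} [Field K] {m : ℕ} (v : K → ℝ)
  (hmul : ∀ a b : K, a ≠ 0 → b ≠ 0 → v (a * b) = v a + v b)
  (hadd : ∀ a b : K, a ≠ 0 → b ≠ 0 → a + b ≠ 0 → min (v a) (v b) ≤ v (a + b))
  (ξ : Fin m → ℝ)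

/-- weight of an exponent -/
noncomputable def wt (ξ : Fin m → ℝ) (α : Fin m →₀ ℕ) : ℝ := ∑ j, ξ j * (α j : ℝ)

lemma wt_add (α β : Fin m →₀ ℕ) : wt ξ (α + β) = wt ξ α + wt ξ β := by
  simp only [wt, Finsupp.add_apply, Nat.cast_add, mul_add]
  rw [Finset.sum_add_distrib]

lemma support_nonempty_of_ne {f : MvPolynomial (Fin m) K} (hf : f ≠ 0) : f.support.Nonempty :=
  Finset.nonempty_iff_ne_empty.mpr (fun h => hf (MvPolynomial.support_eq_empty.mp h))

lemma trop_eq_inf' {f : MvPolynomial (Fin m) K} (hf : f ≠ 0) :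
    Trop v f ξ = f.support.inf' (support_nonempty_of_ne hf)
      (fun α => v (f.coeff α) + wt ξ α) := by
  rw [Trop, dif_pos (support_nonempty_of_ne hf)]; rfl

lemma trop_le {f : MvPolynomial (Fin m) K} (hf : f ≠ 0) {α : Fin m →₀ ℕ}
    (hα : α ∈ f.support) : Trop v f ξ ≤ v (f.coeff α) + wt ξ α := by
  rw [trop_eq_inf' v ξ hf]; exact Finset.inf'_le _ hα

lemma exists_trop {f : MvPolynomial (Fin m) K} (hf : f ≠ 0) :
    ∃ α ∈ f.support, Trop v f ξ = v (f.coeff α) + wt ξ α := by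
  rw [trop_eq_inf' v ξ hf]
  obtain ⟨α, hα, h⟩ := Finset.exists_mem_eq_inf' (support_nonempty_of_ne hf)
    (fun α => v (f.coeff α) + wt ξ α)
  exact ⟨α, hα, h⟩

include hmul hadd in
lemma trop_mul {f h : MvPolynomial (Fin m) K} (hf : f ≠ 0) (hh : h ≠ 0) :
    Trop v (f * h) ξ = Trop v f ξ + Trop v h ξ := by
  classical
  have hfh : f * h ≠ 0 := mul_ne_zero hf hh
  -- minimizer sets
  obtain ⟨α₁, hα₁, _⟩ := exists_trop v ξ hf
  obtain ⟨β₁, hβ₁, _⟩ := exists_trop v ξ hh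
  set Sf := f.support.filter (fun α => v (f.coeff α) + wt ξ α = Trop v f ξ) with hSf
  set Sh := h.support.filter (fun β => v (h.coeff β) + wt ξ β = Trop v h ξ) with hSh
  have hSfne : Sf.Nonempty := by
    obtain ⟨α, hα, he⟩ := exists_trop v ξ hf
    exact ⟨α, Finset.mem_filter.mpr ⟨hα, he.symm⟩⟩
  have hShne : Sh.Nonempty := by
    obtain ⟨β, hβ, he⟩ := exists_trop v ξ hh
    exact ⟨β, Finset.mem_filter.mpr ⟨hβ, he.symm⟩⟩
  obtain ⟨α', hα'S, hα'max⟩ := Finset.exists_max_image Sf (fun α => toLex α) hSfne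
  obtain ⟨β', hβ'S, hβ'max⟩ := Finset.exists_max_image Sh (fun β => toLex β) hShne
  have hα'sup : α' ∈ f.support := (Finset.mem_filter.mp hα'S).1
  have hβ'sup : β' ∈ h.support := (Finset.mem_filter.mp hβ'S).1
  have hα'eq : v (f.coeff α') + wt ξ α' = Trop v f ξ := (Finset.mem_filter.mp hα'S).2
  have hβ'eq : v (h.coeff β') + wt ξ β' = Trop v h ξ := (Finset.mem_filter.mp hβ'S).2
  have hcα' : f.coeff α' ≠ 0 := MvPolynomial.mem_support_iff.mp hα'sup
  have hcβ' : h.coeff β' ≠ 0 := MvPolynomial.mem_support_iff.mp hβ'sup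
  set γ := α' + β' with hγ
  -- key: the coefficient of γ in f*h has valuation v(cα') + v(cβ')
  have hkey : (f * h).coeff γ ≠ 0 ∧ v ((f * h).coeff γ) = v (f.coeff α' * h.coeff β') := by
    rw [MvPolynomial.coeff_mul]
    apply v_sum_strict v hmul hadd _ (fun p => f.coeff p.1 * h.coeff p.2) (α', β')
    · rw [Finset.HasAntidiagonal.mem_antidiagonal]
    · exact mul_ne_zero hcα' hcβ'
    · rintro ⟨α, β⟩ hmem hne hne0
      rw [Finset.HasAntidiagonal.mem_antidiagonal] at hmem
      have hcα : f.coeff α ≠ 0 := left_ne_zero_of_mul hne0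
      have hcβ : h.coeff β ≠ 0 := right_ne_zero_of_mul hne0
      have hαs : α ∈ f.support := MvPolynomial.mem_support_iff.mpr hcα
      have hβs : β ∈ h.support := MvPolynomial.mem_support_iff.mpr hcβ
      have h1 : Trop v f ξ ≤ v (f.coeff α) + wt ξ α := trop_le v ξ hf hαs
      have h2 : Trop v h ξ ≤ v (h.coeff β) + wt ξ β := trop_le v ξ hh hβs
      have hwts : wt ξ α + wt ξ β = wt ξ α' + wt ξ β' := by
        rw [← wt_add, ← wt_add, hmem]
      rw [hmul _ _ hcα' hcβ', hmul _ _ hcα hcβ]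
      by_contra hcon
      push_neg at hcon
      have e1 : v (f.coeff α) + wt ξ α = Trop v f ξ := by linarith
      have e2 : v (h.coeff β) + wt ξ β = Trop v h ξ := by linarith
      have hαS : α ∈ Sf := Finset.mem_filter.mpr ⟨hαs, e1⟩
      have hβS : β ∈ Sh := Finset.mem_filter.mpr ⟨hβs, e2⟩
      have hle1 : toLex α ≤ toLex α' := hα'max α hαS
      have hle2 : toLex β ≤ toLex β' := hβ'max β hβS
      have hsum : toLex α + toLex β = toLex α' + toLex β' := by
        rw [← toLex_add, ← toLex_add, hmem]
      have heq1 : toLex α = toLex α' := by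
        by_contra hne1
        have : toLex α < toLex α' := lt_of_le_of_ne hle1 hne1
        have : toLex α + toLex β < toLex α' + toLex β' :=
          add_lt_add_of_lt_of_le this hle2
        rw [hsum] at this; exact lt_irrefl _ this
      have heq2 : toLex β = toLex β' := by
        by_contra hne2
        have : toLex β < toLex β' := lt_of_le_of_ne hle2 hne2
        have : toLex α + toLex β < toLex α' + toLex β' :=
          add_lt_add_of_le_of_lt hle1 this
        rw [hsum] at this; exact lt_irrefl _ this
      exact hne (Prod.ext (toLex.injective heq1) (toLex.injective heq2))
  have hγsup : γ ∈ (f * h).support := MvPolynomial.mem_support_iff.mpr hkey.1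
  have hγval : v ((f * h).coeff γ) + wt ξ γ = Trop v f ξ + Trop v h ξ := by
    rw [hkey.2, hmul _ _ hcα' hcβ', hγ, wt_add]; linarith
  apply le_antisymm
  · calc Trop v (f * h) ξ ≤ v ((f * h).coeff γ) + wt ξ γ := trop_le v ξ hfh hγsup
    _ = _ := hγval
  · rw [trop_eq_inf' v ξ hfh]
    apply Finset.le_inf'
    intro γ' hγ'
    have hcγ' : (f * h).coeff γ' ≠ 0 := MvPolynomial.mem_support_iff.mp hγ'
    rw [MvPolynomial.coeff_mul] at hcγ' ⊢
    obtain ⟨⟨α, β⟩, hmem, hne0, hle⟩ := v_sum_le' v hmul hadd _ _ hcγ'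
    rw [Finset.HasAntidiagonal.mem_antidiagonal] at hmem
    have hcα : f.coeff α ≠ 0 := left_ne_zero_of_mul hne0
    have hcβ : h.coeff β ≠ 0 := right_ne_zero_of_mul hne0
    have h1 := trop_le v ξ hf (MvPolynomial.mem_support_iff.mpr hcα)
    have h2 := trop_le v ξ hh (MvPolynomial.mem_support_iff.mpr hcβ)
    have hwts : wt ξ γ' = wt ξ α + wt ξ β := by rw [← wt_add, hmem]
    rw [hmul _ _ hcα hcβ] at hle
    linarith

end TropLemmas
section TropLemmas2

variable {K : Type*} [Field K] {m : ℕ} (v : K → ℝ)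
  (hmul : ∀ a b : K, a ≠ 0 → b ≠ 0 → v (a * b) = v a + v b)
  (hadd : ∀ a b : K, a ≠ 0 → b ≠ 0 → a + b ≠ 0 → min (v a) (v b) ≤ v (a + b))
  (ξ : Fin m → ℝ)

lemma trop_singleton {f : MvPolynomial (Fin m) K} (hf : f ≠ 0) {α₀ : Fin m →₀ ℕ}
    (hs : f.support = {α₀}) : Trop v f ξ = v (f.coeff α₀) + wt ξ α₀ := by
  obtain ⟨α, hα, he⟩ := exists_trop v ξ hf
  rw [hs, Finset.mem_singleton] at hα
  rw [he, hα]

include hmul in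
lemma trop_one : Trop v (1 : MvPolynomial (Fin m) K) ξ = 0 := by
  classical
  have hs : (1 : MvPolynomial (Fin m) K).support = {0} := by
    rw [show (1 : MvPolynomial (Fin m) K) = MvPolynomial.monomial 0 1 by
      simp [MvPolynomial.monomial_zero']]
    rw [MvPolynomial.support_monomial, if_neg one_ne_zero]
  rw [trop_singleton v ξ one_ne_zero hs]
  simp [wt, v_one' v hmul]

include hmul in
lemma trop_X (i : Fin m) : Trop v (MvPolynomial.X i : MvPolynomial (Fin m) K) ξ = ξ i := by
  classical
  rw [trop_singleton v ξ (MvPolynomial.X_ne_zero i) MvPolynomial.support_X,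
    MvPolynomial.coeff_X, if_pos rfl, v_one' v hmul]
  rw [show wt ξ (Finsupp.single i 1) = ξ i by
    simp [wt, Finsupp.single_apply]]
  ring

include hmul hadd in
lemma trop_pow {f : MvPolynomial (Fin m) K} (hf : f ≠ 0) (k : ℕ) :
    Trop v (f ^ k) ξ = k * Trop v f ξ := by
  induction k with
  | zero => simp [trop_one v hmul ξ]
  | succ k ih =>
    rw [pow_succ, trop_mul v hmul hadd ξ (pow_ne_zero k hf) hf, ih]
    push_cast; ring

include hmul hadd in
lemma trop_prod {ι : Type*} (s : Finset ι) (p : ι → MvPolynomial (Fin m) K)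
    (hp : ∀ j ∈ s, p j ≠ 0) :
    Trop v (∏ j ∈ s, p j) ξ = ∑ j ∈ s, Trop v (p j) ξ := by
  classical
  induction s using Finset.induction_on with
  | empty => simp [trop_one v hmul ξ]
  | @insert a s ha ih =>
    rw [Finset.prod_insert ha, Finset.sum_insert ha,
      trop_mul v hmul hadd ξ (hp a (Finset.mem_insert_self a s))
        (Finset.prod_ne_zero_iff.mpr (fun j hj => hp j (Finset.mem_insert_of_mem hj))),
      ih (fun j hj => hp j (Finset.mem_insert_of_mem hj))]

end TropLemmas2
/-- Let `π : T^n → T^d` be the torus homomorphism with exponent matrix `E`, and let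
`φ = (f_1/g, …, f_n/g) : T^d ⇢ T^n` be a rational inverse of the restriction of `π`
to a subvariety `X ⊆ T^n` (so that `π ∘ φ = id` wherever defined). Then
`Trop(π) ∘ Trop(φ)` is the identity on `ℝ^d`. Here `K` is algebraically closed and
the valuation `v` is surjective onto `ℝ`. -/
theorem trop_pi_comp_trop_phi_eq_id {K : Type*} [Field K] [IsAlgClosed K]
    {n d : ℕ} (v : K → ℝ)
    (hmul : ∀ a b : K, a ≠ 0 → b ≠ 0 → v (a * b) = v a + v b)
    (hadd : ∀ a b : K, a ≠ 0 → b ≠ 0 → a + b ≠ 0 → min (v a) (v b) ≤ v (a + b))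
    (hsurj : ∀ r : ℝ, ∃ a : K, a ≠ 0 ∧ v a = r)
    (E : Fin d → Fin n → ℤ)
    (f : Fin n → MvPolynomial (Fin d) K) (g : MvPolynomial (Fin d) K)
    (hg : g ≠ 0) (hf : ∀ j, f j ≠ 0)
    (hinv : ∀ y : Fin d → K, (∀ i, y i ≠ 0) → eval y g ≠ 0 →
      (∀ j, eval y (f j) ≠ 0) →
      ∀ i, (∏ j, (eval y (f j) / eval y g) ^ E i j) = y i) :
    ∀ (η : Fin d → ℝ) (i : Fin d),
      (∑ j, (E i j : ℝ) * (Trop v (f j) η - Trop v g η)) = η i := by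
  intro η i
  classical
  set A : Fin n → MvPolynomial (Fin d) K := fun j =>
    if 0 ≤ E i j then (f j) ^ (E i j).toNat else g ^ (-(E i j)).toNat with hA
  set B : Fin n → MvPolynomial (Fin d) K := fun j =>
    if 0 ≤ E i j then g ^ (E i j).toNat else (f j) ^ (-(E i j)).toNat with hB
  have hAne : ∀ j, A j ≠ 0 := fun j => by
    by_cases h : 0 ≤ E i j <;> simp [hA, h, pow_ne_zero, hf j, hg]
  have hBne : ∀ j, B j ≠ 0 := fun j => by
    by_cases h : 0 ≤ E i j <;> simp [hB, h, pow_ne_zero, hf j, hg]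
  have hfprod : (∏ j, f j) ≠ 0 := Finset.prod_ne_zero_iff.mpr (fun j _ => hf j)
  have hBprod : (∏ j, B j) ≠ 0 := Finset.prod_ne_zero_iff.mpr (fun j _ => hBne j)
  -- the polynomial identity  ∏ A j = X i * ∏ B j
  have hpoly : (∏ j, A j) = MvPolynomial.X i * ∏ j, B j := by
    have hXprod : (∏ k, (MvPolynomial.X k : MvPolynomial (Fin d) K)) ≠ 0 :=
      Finset.prod_ne_zero_iff.mpr (fun k _ => MvPolynomial.X_ne_zero k)
    have hC : ((∏ k, MvPolynomial.X k) * (g * ∏ j, f j) : MvPolynomial (Fin d) K) ≠ 0 :=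
      mul_ne_zero hXprod (mul_ne_zero hg hfprod)
    apply mul_right_cancel₀ hC
    apply MvPolynomial.funext
    intro y
    simp only [MvPolynomial.eval_mul, MvPolynomial.eval_prod, MvPolynomial.eval_X]
    by_cases hy2 : MvPolynomial.eval y g = 0
    · rw [hy2]; ring
    by_cases hyk : ∃ k, y k = 0
    · obtain ⟨k, hk⟩ := hyk
      rw [Finset.prod_eq_zero (Finset.mem_univ k) hk]; ring
    by_cases hyf : ∃ j, MvPolynomial.eval y (f j) = 0
    · obtain ⟨j, hj⟩ := hyf
      rw [Finset.prod_eq_zero (f := fun j => MvPolynomial.eval y (f j))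
        (Finset.mem_univ j) hj]; ring
    push_neg at hyk hyf
    have hkey := hinv y hyk hy2 hyf i
    have hstep : ∀ j, MvPolynomial.eval y (A j) =
        (MvPolynomial.eval y (f j) / MvPolynomial.eval y g) ^ (E i j) *
          MvPolynomial.eval y (B j) := by
      intro j
      by_cases h : 0 ≤ E i j
      · obtain ⟨t, ht⟩ : ∃ t : ℕ, E i j = (t : ℤ) :=
          ⟨(E i j).toNat, (Int.toNat_of_nonneg h).symm⟩
        rw [hA, hB]
        simp only [if_pos h, MvPolynomial.eval_pow]
        rw [ht]
        simp only [Int.toNat_natCast, zpow_natCast]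
        rw [div_pow, div_mul_cancel₀]
        exact pow_ne_zero _ hy2
      · obtain ⟨t, ht⟩ : ∃ t : ℕ, E i j = -(t : ℤ) :=
          ⟨(-(E i j)).toNat, by rw [Int.toNat_of_nonneg (by omega)]; ring⟩
        rw [hA, hB]
        simp only [if_neg h, MvPolynomial.eval_pow]
        rw [ht]
        simp only [neg_neg, Int.toNat_natCast, zpow_neg, zpow_natCast]
        rw [div_pow, inv_div, div_mul_cancel₀]
        exact pow_ne_zero _ (hyf j)
    have hAB : (∏ j, MvPolynomial.eval y (A j)) =
        y i * ∏ j, MvPolynomial.eval y (B j) := by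
      have h1 : (∏ j, MvPolynomial.eval y (A j)) =
          ∏ j, ((MvPolynomial.eval y (f j) / MvPolynomial.eval y g) ^ (E i j) *
            MvPolynomial.eval y (B j)) := Finset.prod_congr rfl (fun j _ => hstep j)
      rw [h1, Finset.prod_mul_distrib, hkey]
    rw [hAB]
  -- tropicalize the identity
  have htrop := congrArg (fun p => Trop v p η) hpoly
  rw [trop_prod v hmul hadd η Finset.univ A (fun j _ => hAne j),
    trop_mul v hmul hadd η (MvPolynomial.X_ne_zero i) hBprod,
    trop_X v hmul η i,
    trop_prod v hmul hadd η Finset.univ B (fun j _ => hBne j)] at htrop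
  have hdiff : ∀ j, Trop v (A j) η - Trop v (B j) η =
      (E i j : ℝ) * (Trop v (f j) η - Trop v g η) := by
    intro j
    by_cases h : 0 ≤ E i j
    · rw [hA, hB]
      simp only [if_pos h]
      rw [trop_pow v hmul hadd η (hf j) _, trop_pow v hmul hadd η hg _]
      have hc : (((E i j).toNat : ℕ) : ℝ) = (E i j : ℝ) := by
        exact_mod_cast Int.toNat_of_nonneg h
      rw [hc]; ring
    · rw [hA, hB]
      simp only [if_neg h]
      rw [trop_pow v hmul hadd η hg _, trop_pow v hmul hadd η (hf j) _]
      have hc : ((((-(E i j)).toNat : ℕ)) : ℝ) = -(E i j : ℝ) := by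
        have h2 : (((-(E i j)).toNat : ℤ)) = -(E i j) := Int.toNat_of_nonneg (by omega)
        exact_mod_cast h2
      rw [hc]; ring
  calc (∑ j, (E i j : ℝ) * (Trop v (f j) η - Trop v g η))
      = ∑ j, (Trop v (A j) η - Trop v (B j) η) :=
        Finset.sum_congr rfl (fun j _ => (hdiff j).symm)
    _ = (∑ j, Trop v (A j) η) - ∑ j, Trop v (B j) η := Finset.sum_sub_distrib _ _
    _ = η i := by rw [htrop]; ring
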